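/- For the Brusselator reaction subsystem T' = T²C, C' = −T²C with initial data T(t₀) = T₀ > 0, C(t₀) = C₀ ≥ 0 and k := T₀ + C₀, any solution satisfies 0 < T ≤ k and T is nondecreasing, since T' = T²(k − T) ≥ 0 while 0 < T ≤ k. -/

import Mathlib

open Set

/-- Zero propagation: if `f' = g·f` on `Icc a b` with `g` continuous there and
`f z = 0` at some `z ∈ Icc a b`, then `f ≡ 0` on `Icc a b`. -/
lemma zero_propagation {a b z : ℝ} (hz : z ∈ Set.Icc a b) {f g : ℝ → ℝ}
    (hf : ∀ t ∈ Set.Icc a b, HasDerivAt f (g t * f t) t)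
    (hgc : ContinuousOn g (Set.Icc a b))
    (hfz : f z = 0) : ∀ t ∈ Set.Icc a b, f t = 0 := by
  have hab : a ≤ b := hz.1.trans hz.2
  obtain ⟨L, hL⟩ := (isCompact_Icc (a := a) (b := b)).exists_bound_of_continuousOn hgc
  have hL0 : 0 ≤ L := le_trans (norm_nonneg _) (hL z hz)
  set c : ℝ → ℝ := fun t => min b (max a t) with hc
  have hcmem : ∀ t, c t ∈ Set.Icc a b := fun t =>
    ⟨le_min hab (le_max_left a t), min_le_left _ _⟩
  have hceq : ∀ t ∈ Set.Icc a b, c t = t := by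
    intro t ht
    simp only [hc]
    rw [max_eq_right ht.1, min_eq_right ht.2]
  set v : ℝ → ℝ → ℝ := fun t x => g (c t) * x with hv
  have hlip : ∀ t, LipschitzWith L.toNNReal (v t) := by
    intro t
    apply LipschitzWith.of_dist_le_mul
    intro x y
    simp only [hv, Real.dist_eq, ← mul_sub, abs_mul]
    have : |g (c t)| ≤ L := by
      have := hL (c t) (hcmem t)
      rwa [Real.norm_eq_abs] at this
    have h1 : (L.toNNReal : ℝ) = L := Real.coe_toNNReal L hL0
    rw [h1]
    exact mul_le_mul_of_nonneg_right this (abs_nonneg _)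
  have hlip' : ∀ t, LipschitzOnWith L.toNNReal (v t) (univ : Set ℝ) :=
    fun t => (hlip t).lipschitzOnWith
  have hfc : ContinuousOn f (Set.Icc a b) :=
    fun t ht => (hf t ht).continuousAt.continuousWithinAt
  intro t ht
  rcases le_total t z with htz | hzt
  · -- left part: uniqueness on Icc t z (or Icc a z)
    have key : EqOn f (fun _ => (0 : ℝ)) (Set.Icc a z) := by
      apply ODE_solution_unique_of_mem_Icc_left (v := v) (s := fun _ => (univ : Set ℝ)) (fun t _ => hlip' t)
        (hfc.mono (Icc_subset_Icc_right hz.2))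
      · intro u hu
        have hu' : u ∈ Set.Icc a b := ⟨hu.1.le, hu.2.trans hz.2⟩
        have : v u (f u) = g u * f u := by simp only [hv, hceq u hu']
        rw [this]
        exact (hf u hu').hasDerivWithinAt
      · intro u hu; trivial
      · exact continuousOn_const
      · intro u hu
        have : v u (0 : ℝ) = 0 := by simp [hv]
        rw [this]
        exact hasDerivWithinAt_const _ _ _
      · intro u hu; trivial
      · exact hfz
    exact key ⟨ht.1, htz⟩
  · -- right part: uniqueness on Icc z b
    have key : EqOn f (fun _ => (0 : ℝ)) (Set.Icc z b) := by
      apply ODE_solution_unique_of_mem_Icc_right (v := v) (s := fun _ => (univ : Set ℝ)) (fun t _ => hlip' t)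
        (hfc.mono (Icc_subset_Icc_left hz.1))
      · intro u hu
        have hu' : u ∈ Set.Icc a b := ⟨hz.1.trans hu.1, hu.2.le⟩
        have : v u (f u) = g u * f u := by simp only [hv, hceq u hu']
        rw [this]
        exact (hf u hu').hasDerivWithinAt
      · intro u hu; trivial
      · exact continuousOn_const
      · intro u hu
        have : v u (0 : ℝ) = 0 := by simp [hv]
        rw [this]
        exact hasDerivWithinAt_const _ _ _
      · intro u hu; trivial
      · exact hfz
    exact key ⟨hzt, ht.2⟩

/-- For the Brusselator reaction subsystem `T' = T²C`, `C' = −T²C` with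
`T(t₀) = T₀ > 0`, `C(t₀) = C₀ ≥ 0` and `k := T₀ + C₀`, any solution satisfies
`0 < T ≤ k` and `T` is nondecreasing on the interval. -/
theorem reaction_subsystem_monotone
    (a b t₀ T₀ C₀ : ℝ) (ht₀ : t₀ ∈ Set.Icc a b)
    (T C : ℝ → ℝ)
    (hT : ∀ t ∈ Set.Icc a b, HasDerivAt T ((T t)^2 * C t) t)
    (hC : ∀ t ∈ Set.Icc a b, HasDerivAt C (-((T t)^2 * C t)) t)
    (hT₀ : T t₀ = T₀) (hC₀ : C t₀ = C₀)
    (hT₀pos : 0 < T₀) (hC₀nonneg : 0 ≤ C₀)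
    (k : ℝ) (hk : k = T₀ + C₀) :
    (∀ t ∈ Set.Icc a b, 0 < T t ∧ T t ≤ k) ∧
    MonotoneOn T (Set.Icc a b) := by
  have hTc : ContinuousOn T (Set.Icc a b) :=
    fun t ht => (hT t ht).continuousAt.continuousWithinAt
  have hCc : ContinuousOn C (Set.Icc a b) :=
    fun t ht => (hC t ht).continuousAt.continuousWithinAt
  -- Step 1: T never vanishes on Icc a b, hence T > 0
  have hTne : ∀ t ∈ Set.Icc a b, T t ≠ 0 := by
    intro t ht hTt
    have hall := zero_propagation (f := T) (g := fun u => T u * C u) ht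
      (fun u hu => by
        have := hT u hu
        convert this using 1; ring)
      ((hTc.mul hCc)) hTt t₀ ht₀
    rw [hT₀] at hall
    exact hT₀pos.ne' hall
  have hTpos : ∀ t ∈ Set.Icc a b, 0 < T t := by
    intro t ht
    by_contra hle
    push_neg at hle
    have hlt : T t < 0 := lt_of_le_of_ne hle (hTne t ht)
    have hsub : Set.uIcc t t₀ ⊆ Set.Icc a b := by
      apply Set.uIcc_subset_Icc ht ht₀
    have hmem : (0 : ℝ) ∈ Set.uIcc (T t) (T t₀) := by
      rw [Set.mem_uIcc]
      left
      exact ⟨hlt.le, by rw [hT₀]; exact hT₀pos.le⟩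
    obtain ⟨z, hz, hz0⟩ := intermediate_value_uIcc (hTc.mono hsub) hmem
    exact hTne z (hsub hz) hz0
  -- Step 2: C ≥ 0 on Icc a b
  have hCnonneg : ∀ t ∈ Set.Icc a b, 0 ≤ C t := by
    by_cases hzero : ∃ z ∈ Set.Icc a b, C z = 0
    · obtain ⟨z, hz, hCz⟩ := hzero
      intro t ht
      have := zero_propagation (f := C) (g := fun u => -((T u)^2)) hz
        (fun u hu => by
          have := hC u hu
          convert this using 1; ring)
        ((hTc.pow 2).neg) hCz t ht
      rw [this]
    · push_neg at hzero
      intro t ht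
      by_contra hle
      push_neg at hle
      have hC₀pos : 0 < C t₀ := by
        rw [hC₀]
        rcases hC₀nonneg.lt_or_eq with h | h
        · exact h
        · exact absurd (hC₀ ▸ h.symm) (hzero t₀ ht₀)
      have hsub : Set.uIcc t t₀ ⊆ Set.Icc a b := Set.uIcc_subset_Icc ht ht₀
      have hmem : (0 : ℝ) ∈ Set.uIcc (C t) (C t₀) := by
        rw [Set.mem_uIcc]
        left
        exact ⟨hle.le, hC₀pos.le⟩
      obtain ⟨z, hz, hz0⟩ := intermediate_value_uIcc (hCc.mono hsub) hmem
      exact hzero z (hsub hz) hz0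
  -- Step 3: conservation T + C = k
  have hsum : ∀ t ∈ Set.Icc a b, T t + C t = k := by
    have hconst : ∀ t ∈ Set.Icc a b, T t + C t = T a + C a := by
      intro t ht
      have := constant_of_has_deriv_right_zero (f := fun u => T u + C u)
        (hTc.add hCc)
        (fun x hx => by
          have hx' : x ∈ Set.Icc a b := ⟨hx.1, hx.2.le⟩
          have h := ((hT x hx').add (hC x hx'))
          have h0 : (T x)^2 * C x + -((T x)^2 * C x) = 0 := by ring
          rw [h0] at h
          exact h.hasDerivWithinAt) t ht
      exact this
    intro t ht
    have h1 := hconst t ht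
    have h2 := hconst t₀ ht₀
    rw [hT₀, hC₀, ← hk] at h2
    rw [h1, ← h2]
  -- assemble
  refine ⟨fun t ht => ⟨hTpos t ht, ?_⟩, ?_⟩
  · have := hsum t ht
    nlinarith [hCnonneg t ht]
  · apply monotoneOn_of_deriv_nonneg (convex_Icc a b) hTc
    · intro x hx
      rw [interior_Icc] at hx
      exact (hT x ⟨hx.1.le, hx.2.le⟩).differentiableAt.differentiableWithinAt
    · intro x hx
      rw [interior_Icc] at hx
      have hx' : x ∈ Set.Icc a b := ⟨hx.1.le, hx.2.le⟩
      rw [(hT x hx').deriv]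
      exact mul_nonneg (sq_nonneg _) (hCnonneg x hx')
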